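/- Let F ∈ ℂ[x_1,…,x_r] be a smooth homogeneous polynomial of degree d ≥ 3, where r ≥ 2. Fix positive integers r_1,…,r_m with r_1 + ⋯ + r_m = r, where 1 ≤ m ≤ r. Let N be a subgroup of Aut(F) each of whose elements is a block-scalar diagonal matrix diag(λ_1 I_{r_1}, λ_2 I_{r_2}, …, λ_m I_{r_m}) with λ_1,…,λ_m ∈ ℂ^×. Then N is finite of order |N| ≤ d^m. -/

import Mathlib

open MvPolynomial

/-- The action of a matrix on a multivariate polynomial: `A(F) = F(∑ a₁ᵢxᵢ, …, ∑ aᵣᵢxᵢ)`. -/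
noncomputable def matAct {r : ℕ} (A : Matrix (Fin r) (Fin r) ℂ) (F : MvPolynomial (Fin r) ℂ) :
    MvPolynomial (Fin r) ℂ :=
  MvPolynomial.bind₁ (fun i => ∑ j, MvPolynomial.C (A i j) * MvPolynomial.X j) F

lemma matAct_one {r : ℕ} (F : MvPolynomial (Fin r) ℂ) : matAct 1 F = F := by
  have : (fun i : Fin r => ∑ j, MvPolynomial.C ((1 : Matrix (Fin r) (Fin r) ℂ) i j)
      * MvPolynomial.X j) = MvPolynomial.X := by
    funext i
    simp [Matrix.one_apply, apply_ite (MvPolynomial.C (σ := Fin r) (R := ℂ)), ite_mul]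
  rw [matAct, this, MvPolynomial.bind₁_X_left]
  rfl

lemma matAct_mul {r : ℕ} (A B : Matrix (Fin r) (Fin r) ℂ) (F : MvPolynomial (Fin r) ℂ) :
    matAct (A * B) F = matAct B (matAct A F) := by
  unfold matAct
  rw [MvPolynomial.bind₁_bind₁]
  have h : (fun i : Fin r => (bind₁ fun i => ∑ j, C (B i j) * X j) (∑ j, C (A i j) * X j))
      = fun i : Fin r => ∑ j, C ((A * B) i j) * X j := by
    funext i
    rw [map_sum]
    simp only [map_mul, bind₁_C_right, bind₁_X_right, algebraMap_eq, Matrix.mul_apply,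
      Finset.mul_sum, map_sum, Finset.sum_mul, C_mul]
    rw [Finset.sum_comm]
    simp [mul_assoc]
  rw [h]

/-- The automorphism group of a form, as a subgroup of `GL`. -/
noncomputable def formAut {r : ℕ} (F : MvPolynomial (Fin r) ℂ) : Subgroup (GL (Fin r) ℂ) where
  carrier := {A | matAct (A : Matrix (Fin r) (Fin r) ℂ) F = F}
  one_mem' := by simpa using matAct_one F
  mul_mem' := by
    intro A B hA hB
    simp only [Set.mem_setOf_eq] at *
    rw [Units.val_mul, matAct_mul, hA, hB]
  inv_mem' := by
    intro A hA
    simp only [Set.mem_setOf_eq] at *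
    conv_lhs => rw [← hA]
    rw [← matAct_mul, Units.mul_inv, matAct_one]

/-- `F` is a smooth form: the origin is the only common zero of all partial derivatives. -/
def IsSmoothForm {r : ℕ} (F : MvPolynomial (Fin r) ℂ) : Prop :=
  ∀ x : Fin r → ℂ, (∀ i, MvPolynomial.eval x (MvPolynomial.pderiv i F) = 0) → x = 0

/-- Two forms are isomorphic if they are in the same `GL`-orbit. -/
def FormIso {r : ℕ} (F G : MvPolynomial (Fin r) ℂ) : Prop :=
  ∃ A : GL (Fin r) ℂ, matAct (A : Matrix (Fin r) (Fin r) ℂ) F = G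

/-- The Fermat form of degree `d` in `r` variables. -/
noncomputable def fermatForm (r d : ℕ) : MvPolynomial (Fin r) ℂ :=
  ∑ i, MvPolynomial.X i ^ d


section Aux

/-! ### Auxiliary lemmas -/

lemma bind₁_scale_monomial {r : ℕ} (g : Fin r → ℂ) (s : Fin r →₀ ℕ) (c : ℂ) :
    MvPolynomial.bind₁ (fun i => MvPolynomial.C (g i) * MvPolynomial.X i) (monomial s c)
      = monomial s (c * ∏ i, g i ^ s i) := by
  rw [bind₁, aeval_monomial]
  rw [Finsupp.prod_fintype _ _ (fun i => by simp)]
  have : ∀ i : Fin r, (C (g i) * X i : MvPolynomial (Fin r) ℂ) ^ s i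
      = C (g i ^ s i) * X i ^ s i := by
    intro i; rw [mul_pow, ← C_pow]
  simp_rw [this]
  rw [Finset.prod_mul_distrib, ← map_prod]
  rw [monomial_eq, Finsupp.prod_fintype _ _ (fun i => by simp)]
  rw [algebraMap_eq, map_mul]
  ring

lemma coeff_bind₁_scale {r : ℕ} (g : Fin r → ℂ) (F : MvPolynomial (Fin r) ℂ) (α : Fin r →₀ ℕ) :
    MvPolynomial.coeff α (MvPolynomial.bind₁ (fun i => MvPolynomial.C (g i) * MvPolynomial.X i) F)
      = (∏ i, g i ^ α i) * MvPolynomial.coeff α F := by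
  conv_lhs => rw [F.as_sum]
  rw [map_sum]
  have : ∀ s ∈ F.support, MvPolynomial.coeff α
      ((MvPolynomial.bind₁ (fun i => MvPolynomial.C (g i) * MvPolynomial.X i)) (monomial s (coeff s F)))
      = if s = α then coeff s F * ∏ i, g i ^ s i else 0 := by
    intro s _; rw [bind₁_scale_monomial, coeff_monomial]
  rw [coeff_sum, Finset.sum_congr rfl this, Finset.sum_ite_eq' F.support α]
  by_cases h : α ∈ F.support
  · simp [h, mul_comm]
  · simp [h, MvPolynomial.notMem_support_iff.mp h]

lemma smooth_exists_coeff {r d : ℕ} (hd : 1 ≤ d)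
    (F : MvPolynomial (Fin r) ℂ) (hhom : F.IsHomogeneous d) (hsm : ∀ x : Fin r → ℂ,
      (∀ i, MvPolynomial.eval x (MvPolynomial.pderiv i F) = 0) → x = 0) (i : Fin r) :
    ∃ j, MvPolynomial.coeff (Finsupp.single i (d-1) + Finsupp.single j 1) F ≠ 0 := by
  by_contra hcon
  push_neg at hcon
  have hev : ∀ j, MvPolynomial.eval (Pi.single i 1) (MvPolynomial.pderiv j F) = 0 := by
    intro j
    conv_lhs => rw [F.as_sum]
    rw [map_sum, map_sum]
    apply Finset.sum_eq_zero
    intro s hs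
    rw [pderiv_monomial, eval_monomial]
    rcases Nat.eq_zero_or_pos (s j) with h0 | hpos
    · simp [h0]
    set u : Fin r →₀ ℕ := s - Finsupp.single j 1 with hu
    by_cases hsupp : u.support ⊆ {i}
    · -- then s is the forbidden monomial
      have hui : u = Finsupp.single i (u i) := Finsupp.support_subset_singleton.mp hsupp
      have hsu : s = u + Finsupp.single j 1 := by
        rw [hu, tsub_add_cancel_of_le]
        rw [Finsupp.single_le_iff]
        exact hpos
      have hdeg : s.degree = d := by
        by_contra hne
        exact absurd (hhom.coeff_eq_zero hne) (MvPolynomial.mem_support_iff.mp hs)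
      have hud : u i = d - 1 := by
        have hsingle : ∀ (a : Fin r) (k : ℕ), ((Finsupp.weight (1 : Fin r → ℕ)) (Finsupp.single a k)) = k := by
          intro a k
          simp [Finsupp.weight_apply, Finsupp.sum_single_index]
        have : s.degree = u i + 1 := by
          rw [hsu, hui, Finsupp.degree_eq_weight_one, map_add]
          erw [hsingle, hsingle]
          rw [Finsupp.single_eq_same]
        omega
      have : s = Finsupp.single i (d-1) + Finsupp.single j 1 := by
        rw [hsu, hui, hud]
      rw [this] at hs
      exact absurd (hcon j) (MvPolynomial.mem_support_iff.mp hs)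
    · -- product vanishes
      have : (u.prod fun n e => (Pi.single i 1 : Fin r → ℂ) n ^ e) = 0 := by
        obtain ⟨i', hi'o, hi'⟩ : ∃ i' ∈ u.support, i' ≠ i := by
          by_contra hc
          push_neg at hc
          exact hsupp fun x hx => Finset.mem_singleton.mpr (hc x hx)
        refine Finset.prod_eq_zero hi'o ?_
        show (Pi.single i 1 : Fin r → ℂ) i' ^ u i' = 0
        rw [Pi.single_eq_of_ne hi', zero_pow]
        exact Finsupp.mem_support_iff.mp hi'o
      rw [this, mul_zero]
  have := hsm (Pi.single i 1) hev
  have h1 : (Pi.single i 1 : Fin r → ℂ) i = 1 := Pi.single_eq_same i 1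
  rw [this] at h1
  simp at h1

/-- solution set of the system `λ k ^ e * λ (τ k) = 1`. -/
def solSet (e : ℕ) {α : Type} (τ : α → α) : Set (α → ℂˣ) :=
  {lam | ∀ k, lam k ^ e * lam (τ k) = 1}

lemma pow_add_one_le {e l : ℕ} (he : 1 ≤ e) (hl : 1 ≤ l) : e ^ l + 1 ≤ (e+1) ^ l := by
  induction l with
  | zero => omega
  | succ n ih =>
    rcases Nat.eq_zero_or_pos n with h | h
    · subst h; simp
    · have ihn := ih h
      have h1 : (e+1)^(n+1) = (e+1)^n * e + (e+1)^n := by ring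
      have h2 : (e+1)^n * e ≥ (e^n + 1) * e := by
        have := Nat.le_of_succ_le ihn
        nlinarith [Nat.one_le_iff_ne_zero.mpr (pow_ne_zero n (by omega : e ≠ 0))]
      have h3 : (e^n + 1) * e = e^(n+1) + e := by ring
      have h4 : 1 ≤ (e+1)^n := Nat.one_le_iff_ne_zero.mpr (pow_ne_zero n (by omega))
      omega

lemma unit_pow_natAbs {z : ℂˣ} {E : ℤ} (h : z ^ E = 1) : z ^ E.natAbs = 1 := by
  rcases Int.natAbs_eq E with hE | hE
  · rw [← zpow_natCast, ← hE, h]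
  · rw [← zpow_natCast, show (E.natAbs : ℤ) = -E by omega, zpow_neg, h, inv_one]

lemma solSet_card (e : ℕ) (he : 2 ≤ e) :
    ∀ (n : ℕ) (α : Type) (inst : Fintype α) (τ : α → α), Fintype.card α = n →
      (solSet e τ).Finite ∧ Nat.card (solSet e τ) ≤ (e+1) ^ n := by
  intro n
  induction n using Nat.strong_induction_on with
  | _ n IH =>
  intro α inst τ hcard
  classical
  by_cases hsurj : Function.Surjective τ
  · -- permutation case
    rcases Nat.eq_zero_or_pos n with hn0 | hn
    · -- empty
      subst hn0
      haveI hae : IsEmpty α := Fintype.card_eq_zero_iff.mp hcard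
      have hsub : (solSet e τ).Subsingleton := fun x _ y _ => funext fun k => hae.elim k
      refine ⟨hsub.finite, ?_⟩
      haveI := hsub.coe_sort
      have h1 : Nat.card ↥(solSet e τ) ≤ Nat.card Unit :=
        Nat.card_le_card_of_injective (fun _ => ()) (fun a b _ => Subsingleton.elim a b)
      simpa using h1
    haveI : Nonempty α := Fintype.card_pos_iff.mp (by omega)
    have hinj : Function.Injective τ := Finite.injective_iff_surjective.mpr hsurj
    set p : Equiv.Perm α := Equiv.ofBijective τ ⟨hinj, hsurj⟩ with hp
    have hppos : 0 < orderOf p := orderOf_pos p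
    set k0 : α := Classical.arbitrary α
    have hiter : τ^[orderOf p] k0 = k0 := by
      have h1 : ⇑(p ^ orderOf p) = τ^[orderOf p] := by
        rw [Equiv.Perm.coe_pow]; rfl
      rw [← h1, pow_orderOf_eq_one p]; rfl
    have hper : Function.IsPeriodicPt τ (orderOf p) k0 := hiter
    set l := Function.minimalPeriod τ k0 with hldef
    have hl : 0 < l := Function.IsPeriodicPt.minimalPeriod_pos hppos hper
    set O : Finset α := (Finset.range l).image (fun j => τ^[j] k0) with hO
    have hOmem : ∀ j : ℕ, τ^[j] k0 ∈ O := by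
      intro j
      refine Finset.mem_image.mpr ⟨j % l, Finset.mem_range.mpr (Nat.mod_lt _ hl), ?_⟩
      exact Function.iterate_mod_minimalPeriod_eq
    have hOcard : O.card = l := by
      rw [hO, Finset.card_image_of_injOn, Finset.card_range]
      rw [Finset.coe_range]
      exact Function.iterate_injOn_Iio_minimalPeriod
    have hOinv : ∀ x : α, x ∉ O → τ x ∉ O := by
      intro x hx hτx
      obtain ⟨j, _, hj⟩ := Finset.mem_image.mp hτx
      cases j with
      | zero =>
        have h5 : τ^[l] k0 = τ (τ^[l-1] k0) := by
          conv_lhs => rw [show l = (l-1)+1 by omega]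
          rw [Function.iterate_succ_apply']
        have : τ x = τ (τ^[l-1] k0) := by
          rw [← h5, Function.iterate_minimalPeriod]
          exact hj.symm
        exact hx (hinj this ▸ hOmem (l-1))
      | succ j' =>
        have : τ x = τ (τ^[j'] k0) := by
          rw [← Function.iterate_succ_apply' τ j' k0]; exact hj.symm
        exact hx (hinj this ▸ hOmem j')
    set α' := {x : α // x ∉ O} with hα'
    have hcard' : Fintype.card α' = n - l := by
      show Fintype.card {x : α // ¬ x ∈ O} = n - l
      rw [Fintype.card_subtype_compl, Fintype.card_coe, hOcard, hcard]
    have hln : l ≤ n := by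
      rw [← hOcard, ← hcard]; exact Finset.card_le_univ O
    set τ' : α' → α' := fun x => ⟨τ x.1, hOinv x.1 x.2⟩ with hτ'
    obtain ⟨hfin', hle'⟩ := IH (n - l) (by omega) α' _ τ' hcard'
    haveI : Finite ↥(solSet e τ') := hfin'
    -- orbit values
    have hrel : ∀ lam ∈ solSet e τ, ∀ y : α, lam (τ y) = lam y ^ (-(e:ℤ)) := by
      intro lam hlam y
      have h := (inv_eq_of_mul_eq_one_right (hlam y)).symm
      rw [h, zpow_neg, zpow_natCast]
    have horb : ∀ lam ∈ solSet e τ, ∀ j : ℕ, lam (τ^[j] k0) = lam k0 ^ ((-(e:ℤ))^j) := by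
      intro lam hlam j
      induction j with
      | zero => simp
      | succ j' ih =>
        rw [Function.iterate_succ_apply', hrel lam hlam, ih, ← zpow_mul, ← pow_succ]
    set E : ℤ := (-(e:ℤ))^l - 1 with hEdef
    set M : ℕ := E.natAbs with hM
    have habs : ((-(e:ℤ))^l).natAbs = e^l := by
      rw [Int.natAbs_pow]; simp
    have hM0 : M ≠ 0 := by
      intro h
      have hE0 : E = 0 := Int.natAbs_eq_zero.mp h
      have h2 : (-(e:ℤ))^l = 1 := by omega
      rw [h2, Int.natAbs_one] at habs
      have h3 : 2 ≤ e ^ l := by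
        calc 2 = 2^1 := (pow_one 2).symm
        _ ≤ 2 ^ l := Nat.pow_le_pow_right (by norm_num) hl
        _ ≤ e ^ l := Nat.pow_le_pow_left he l
      rw [← habs] at h3
      norm_num at h3
    have hMle : M ≤ (e+1)^l := by
      have h1 : M ≤ e^l + 1 := by
        calc M ≤ ((-(e:ℤ))^l).natAbs + (1:ℤ).natAbs := Int.natAbs_sub_le _ _
        _ = e^l + 1 := by rw [habs]; rfl
      exact le_trans h1 (pow_add_one_le (by omega) hl)
    haveI : NeZero M := ⟨hM0⟩
    have hmem : ∀ lam ∈ solSet e τ, lam k0 ∈ rootsOfUnity M ℂ := by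
      intro lam hlam
      rw [mem_rootsOfUnity]
      apply unit_pow_natAbs (E := E)
      have h1 := horb lam hlam l
      rw [Function.iterate_minimalPeriod] at h1
      rw [hEdef, zpow_sub, ← h1, zpow_one]
      simp
    have hmem' : ∀ lam ∈ solSet e τ, (fun x : α' => lam x.1) ∈ solSet e τ' := by
      intro lam hlam x
      exact hlam x.1
    set Φ : ↥(solSet e τ) → ↥(rootsOfUnity M ℂ) × ↥(solSet e τ') :=
      fun lam => (⟨lam.1 k0, hmem lam.1 lam.2⟩, ⟨fun x => lam.1 x.1, hmem' lam.1 lam.2⟩) with hΦ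
    have hΦinj : Function.Injective Φ := by
      intro a b hab
      have h1 : a.1 k0 = b.1 k0 := congrArg (fun z => (z.1 : ℂˣ)) hab
      have h2 : ∀ x : α', a.1 x.1 = b.1 x.1 := fun x =>
        congrFun (congrArg (fun z => (z.2 : α' → ℂˣ)) hab) x
      apply Subtype.ext
      funext x
      by_cases hx : x ∈ O
      · obtain ⟨j, _, hj⟩ := Finset.mem_image.mp hx
        rw [← hj, horb a.1 a.2 j, horb b.1 b.2 j, h1]
      · exact h2 ⟨x, hx⟩
    constructor
    · have : Finite ↥(solSet e τ) := Finite.of_injective Φ hΦinj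
      exact Set.toFinite _
    · calc Nat.card ↥(solSet e τ) ≤ Nat.card (↥(rootsOfUnity M ℂ) × ↥(solSet e τ')) :=
            Nat.card_le_card_of_injective Φ hΦinj
        _ = M * Nat.card ↥(solSet e τ') := by
            rw [Nat.card_prod, Complex.card_rootsOfUnity]
        _ ≤ (e+1)^l * (e+1)^(n-l) := Nat.mul_le_mul hMle hle'
        _ = (e+1)^n := by rw [← pow_add]; congr 1; omega
  · -- non-surjective case
    rw [Function.Surjective] at hsurj
    push_neg at hsurj
    obtain ⟨s, hsr⟩ := hsurj
    have hs : s ∉ Set.range τ := by rintro ⟨x, rfl⟩; exact hsr x rfl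
    haveI : Nonempty α := ⟨s⟩
    have hn : 1 ≤ n := by rw [← hcard]; exact Fintype.card_pos
    set α' := {x : α // x ≠ s} with hα'
    have hcard' : Fintype.card α' = n - 1 := by
      show Fintype.card {x : α // ¬ x = s} = n - 1
      rw [Fintype.card_subtype_compl, Fintype.card_subtype_eq, hcard]
    set τ' : α' → α' := fun x => ⟨τ x.1, fun h => hs ⟨x.1, h⟩⟩ with hτ'
    obtain ⟨hfin', hle'⟩ := IH (n - 1) (by omega) α' _ τ' hcard'
    haveI : Finite ↥(solSet e τ') := hfin'
    have hroot : ∀ c : ℂˣ, ∃ w : ℂˣ, w ^ e = c := by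
      intro c
      obtain ⟨z, hz⟩ := IsAlgClosed.exists_pow_nat_eq (c : ℂ) (by omega : 0 < e)
      have hz0 : z ≠ 0 := by
        intro h; rw [h, zero_pow (by omega : e ≠ 0)] at hz
        exact c.ne_zero hz.symm
      exact ⟨Units.mk0 z hz0, Units.ext (by simp [hz])⟩
    choose root hrootspec using hroot
    haveI : NeZero e := ⟨by omega⟩
    have hτs : τ s ≠ s := fun h => hs ⟨s, h⟩
    have hmem : ∀ lam ∈ solSet e τ,
        lam s / root ((lam (τ s))⁻¹) ∈ rootsOfUnity e ℂ := by
      intro lam hlam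
      rw [mem_rootsOfUnity, div_pow, hrootspec, div_inv_eq_mul]
      exact hlam s
    have hmem' : ∀ lam ∈ solSet e τ, (fun x : α' => lam x.1) ∈ solSet e τ' := by
      intro lam hlam x
      exact hlam x.1
    set Φ : ↥(solSet e τ) → ↥(rootsOfUnity e ℂ) × ↥(solSet e τ') :=
      fun lam => (⟨_, hmem lam.1 lam.2⟩, ⟨fun x => lam.1 x.1, hmem' lam.1 lam.2⟩) with hΦ
    have hΦinj : Function.Injective Φ := by
      intro a b hab
      have h2 : ∀ x : α', a.1 x.1 = b.1 x.1 := fun x =>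
        congrFun (congrArg (fun z => (z.2 : α' → ℂˣ)) hab) x
      have h3 : a.1 (τ s) = b.1 (τ s) := h2 ⟨τ s, hτs⟩
      have h1 : a.1 s / root ((a.1 (τ s))⁻¹) = b.1 s / root ((b.1 (τ s))⁻¹) :=
        congrArg (fun z => (z.1 : ℂˣ)) hab
      rw [h3] at h1
      have h4 : a.1 s = b.1 s := by
        exact div_left_inj.mp h1
      apply Subtype.ext
      funext x
      by_cases hx : x = s
      · rw [hx]; exact h4
      · exact h2 ⟨x, hx⟩
    constructor
    · have : Finite ↥(solSet e τ) := Finite.of_injective Φ hΦinj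
      exact Set.toFinite _
    · calc Nat.card ↥(solSet e τ) ≤ Nat.card (↥(rootsOfUnity e ℂ) × ↥(solSet e τ')) :=
            Nat.card_le_card_of_injective Φ hΦinj
        _ = e * Nat.card ↥(solSet e τ') := by
            rw [Nat.card_prod, Complex.card_rootsOfUnity]
        _ ≤ (e+1) * (e+1)^(n-1) := Nat.mul_le_mul (by omega) hle'
        _ = (e+1)^n := by rw [← pow_succ']; congr 1; omega

lemma prod_pow_single {r : ℕ} (g : Fin r → ℂ) (i : Fin r) (k : ℕ) :
    ∏ i', g i' ^ (Finsupp.single i k i') = g i ^ k := by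
  rw [Finset.prod_eq_single i]
  · rw [Finsupp.single_eq_same]
  · intro j _ hj
    rw [Finsupp.single_eq_of_ne' (Ne.symm hj), pow_zero]
  · intro h; exact absurd (Finset.mem_univ i) h

lemma matAct_diagonal {r : ℕ} (g : Fin r → ℂ) (F : MvPolynomial (Fin r) ℂ) :
    matAct (Matrix.diagonal g) F
      = MvPolynomial.bind₁ (fun i => MvPolynomial.C (g i) * MvPolynomial.X i) F := by
  unfold matAct
  have h : (fun i => ∑ j, MvPolynomial.C (Matrix.diagonal g i j) * MvPolynomial.X j)
      = fun i : Fin r => MvPolynomial.C (g i) * MvPolynomial.X i := by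
    funext i
    rw [Finset.sum_eq_single i]
    · rw [Matrix.diagonal_apply_eq]
    · intro j _ hj
      rw [Matrix.diagonal_apply_ne _ (Ne.symm hj), map_zero, zero_mul]
    · intro h; exact absurd (Finset.mem_univ i) h
  rw [h]

end Aux

/-- an abelian subgroup of `Aut(F)` consisting of block-scalar diagonal
matrices with `m` blocks has order at most `d^m`. -/
theorem block_scalar_subgroup_card_le
    (r d m : ℕ) (hr : 2 ≤ r) (hd : 3 ≤ d) (hm1 : 1 ≤ m) (hmr : m ≤ r)
    (ρ : Fin m → ℕ) (hρ : ∀ k, 0 < ρ k) (hsum : ∑ k, ρ k = r)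
    (b : Fin r → Fin m) (hb : Monotone b)
    (hfib : ∀ k, (Finset.univ.filter fun i : Fin r => b i = k).card = ρ k)
    (F : MvPolynomial (Fin r) ℂ) (hhom : F.IsHomogeneous d) (hsm : IsSmoothForm F)
    (N : Subgroup (GL (Fin r) ℂ)) (hN : N ≤ formAut F)
    (hblock : ∀ A ∈ N, ∃ lam : Fin m → ℂ,
      (A : Matrix (Fin r) (Fin r) ℂ) = Matrix.diagonal fun i => lam (b i)) :
    (N : Set (GL (Fin r) ℂ)).Finite ∧ Nat.card N ≤ d ^ m := by
  classical
  have hbsurj : ∀ k : Fin m, ∃ i : Fin r, b i = k := by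
    intro k
    have hpos : 0 < (Finset.univ.filter fun i : Fin r => b i = k).card := by
      rw [hfib k]; exact hρ k
    obtain ⟨i, hi⟩ := Finset.card_pos.mp hpos
    exact ⟨i, (Finset.mem_filter.mp hi).2⟩
  choose iRep hiRep using hbsurj
  choose jmap hjmap using fun i => smooth_exists_coeff (by omega) F hhom hsm i
  set τ : Fin m → Fin m := fun k => b (jmap (iRep k)) with hτ
  have key : ∀ A : ↥N, ∃ lam : Fin m → ℂ,
      ((A : GL (Fin r) ℂ) : Matrix (Fin r) (Fin r) ℂ) = Matrix.diagonal (fun i => lam (b i))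
      ∧ (∀ k, lam k ≠ 0) ∧ (∀ i : Fin r, lam (b i) ^ (d-1) * lam (b (jmap i)) = 1) := by
    intro A
    obtain ⟨lam, hlam⟩ := hblock A.1 A.2
    have hne : ∀ k, lam k ≠ 0 := by
      have hu : IsUnit ((A.1 : GL (Fin r) ℂ) : Matrix (Fin r) (Fin r) ℂ).det :=
        (Matrix.isUnit_iff_isUnit_det _).mp (Units.isUnit A.1)
      rw [hlam, Matrix.det_diagonal] at hu
      have hprod : (∏ i, lam (b i)) ≠ 0 := hu.ne_zero
      intro k
      have : lam (b (iRep k)) ≠ 0 := fun h => hprod (Finset.prod_eq_zero (Finset.mem_univ _) h)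
      rw [hiRep k] at this
      exact this
    refine ⟨lam, hlam, hne, ?_⟩
    intro i
    have hAct : matAct ((A.1 : GL (Fin r) ℂ) : Matrix (Fin r) (Fin r) ℂ) F = F := hN A.2
    rw [hlam, matAct_diagonal] at hAct
    set α : Fin r →₀ ℕ := Finsupp.single i (d-1) + Finsupp.single (jmap i) 1 with hα
    have h1 : coeff α F ≠ 0 := hjmap i
    have h2 := coeff_bind₁_scale (fun i' => lam (b i')) F α
    rw [hAct] at h2
    have h3 : (∏ i', lam (b i') ^ (α i')) = 1 := by
      apply mul_right_cancel₀ h1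
      rw [one_mul]
      exact h2.symm
    have h4 : (∏ i', lam (b i') ^ (α i')) = lam (b i) ^ (d-1) * lam (b (jmap i)) := by
      have hpt : ∀ i', α i' = Finsupp.single i (d-1) i' + Finsupp.single (jmap i) 1 i' :=
        fun i' => Finsupp.add_apply _ _ _
      simp_rw [hpt, pow_add]
      rw [Finset.prod_mul_distrib, prod_pow_single, prod_pow_single, pow_one]
    rw [← h4]
    exact h3
  choose lam hlamdiag hlamne hlamrel using key
  have hΨmem : ∀ A : ↥N, (fun k => Units.mk0 (lam A k) (hlamne A k)) ∈ solSet (d-1) τ := by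
    intro A k
    apply Units.ext
    have hval : ((Units.mk0 (lam A k) (hlamne A k)) ^ (d-1)
        * Units.mk0 (lam A (τ k)) (hlamne A (τ k)) : ℂˣ).val
        = lam A k ^ (d-1) * lam A (τ k) := by
      simp
    rw [hval]
    have h := hlamrel A (iRep k)
    rw [hiRep k] at h
    exact h
  set Ψ : ↥N → ↥(solSet (d-1) τ) := fun A => ⟨_, hΨmem A⟩ with hΨ
  have hΨinj : Function.Injective Ψ := by
    intro A B hAB
    have h1 : ∀ k, lam A k = lam B k := by
      intro k
      have := congrFun (congrArg Subtype.val hAB) k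
      exact congrArg Units.val this
    have h2 : ((A.1 : GL (Fin r) ℂ) : Matrix (Fin r) (Fin r) ℂ)
        = ((B.1 : GL (Fin r) ℂ) : Matrix (Fin r) (Fin r) ℂ) := by
      have hf : (fun i => lam A (b i)) = (fun i => lam B (b i)) := funext fun i => h1 (b i)
      rw [hlamdiag A, hlamdiag B, hf]
    exact Subtype.ext (Units.ext h2)
  obtain ⟨hfinS, hcardS⟩ := solSet_card (d-1) (by omega) m (Fin m) inferInstance τ (by simp)
  haveI : Finite ↥(solSet (d-1) τ) := hfinS
  haveI hNfin : Finite ↥N := Finite.of_injective Ψ hΨinj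
  constructor
  · exact Set.finite_coe_iff.mp (by exact hNfin)
  · calc Nat.card ↥N ≤ Nat.card ↥(solSet (d-1) τ) := Nat.card_le_card_of_injective Ψ hΨinj
      _ ≤ (d-1+1)^m := hcardS
      _ = d^m := by congr 1; omega
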